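/- arXiv:1801.06585 — 2 statements merged into one kernel-verified Lean document; each statement's English description precedes it below -/
import Mathlib

section
/- The 3-gonal bipyramid (two apex vertices a, b each joined to all vertices of a triangle 1,2,3) is a z-knotted triangulation of the sphere: up to reversal it has exactly one zigzag, namely the cyclic sequence a1,12,2b,b3,31,1a,a2,23,3b,b1,12,2a,a3,31,1b,b2,23,3a of length 18. -/
open Finset

/-- A (combinatorial) triangulation of a connected closed surface:
a finite set of triangular faces such that every edge lies in exactly two
faces, two distinct faces meet in at most an edge, and the dual graph is
connected. -/
structure Triangulation (V : Type) [Fintype V] [DecidableEq V] where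
  faces : Finset (Finset V)
  faces_nonempty : faces.Nonempty
  card_eq : ∀ F ∈ faces, F.card = 3
  edge_two_faces : ∀ e : Finset V, e.card = 2 → (∃ F ∈ faces, e ⊆ F) →
      (faces.filter fun F => e ⊆ F).card = 2
  inter_le : ∀ F ∈ faces, ∀ F' ∈ faces, F ≠ F' → (F ∩ F').card ≤ 2
  connected : ∀ F ∈ faces, ∀ F' ∈ faces,
      Relation.ReflTransGen
        (fun A B => A ∈ faces ∧ B ∈ faces ∧ (A ∩ B).card = 2) F F'

namespace Triangulation

variable {V : Type} [Fintype V] [DecidableEq V] (T : Triangulation V)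

/-- `e` is an edge of the triangulation. -/
def IsEdge (e : Finset V) : Prop := e.card = 2 ∧ ∃ F ∈ T.faces, e ⊆ F

/-- A zigzag sequence: consecutive edges are adjacent (distinct, sharing a
vertex and a face), the faces containing consecutive pairs are distinct, and
edges two apart are disjoint. -/
def IsZigzagSeq (f : ℕ → Finset V) : Prop :=
  (∀ i, T.IsEdge (f i)) ∧
  (∀ i, f i ≠ f (i + 1) ∧ (f i ∩ f (i + 1)).Nonempty ∧
      ∃ F ∈ T.faces, f i ⊆ F ∧ f (i + 1) ⊆ F) ∧
  (∀ i, ∀ F ∈ T.faces, ∀ F' ∈ T.faces,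
      f i ⊆ F → f (i + 1) ⊆ F → f (i + 1) ⊆ F' → f (i + 2) ⊆ F' → F ≠ F') ∧
  (∀ i, f i ∩ f (i + 2) = ∅)

/-- A zigzag: a zigzag sequence together with its (minimal) period. -/
structure Zigzag where
  seq : ℕ → Finset V
  period : ℕ
  period_pos : 0 < period
  periodic : ∀ i, seq (i + period) = seq i
  period_min : ∀ m, 0 < m → (∀ i, seq (i + m) = seq i) → period ≤ m
  isZigzag : T.IsZigzagSeq seq

variable {T}

/-- Two zigzags are the same cyclic sequence (up to a shift). -/
def Zigzag.Equiv (Z Z' : T.Zigzag) : Prop := ∃ k, ∀ i, Z'.seq i = Z.seq (i + k)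

/-- `Z'` is the reversal of `Z` (up to a shift). -/
def Zigzag.IsReverseOf (Z' Z : T.Zigzag) : Prop :=
  ∃ k, ∀ i, Z'.seq i = Z.seq (k + Z.period - i % Z.period)

/-- The zigzag `Z` contains an edge of the face `F`. -/
def Zigzag.Meets (Z : T.Zigzag) (F : Finset V) : Prop := ∃ i, Z.seq i ⊆ F

/-- `F` is the `i`-th face of the face shadow of `Z`, i.e. the face containing
the `i`-th and `(i+1)`-st edges of `Z`. -/
def Zigzag.ShadowAt (Z : T.Zigzag) (i : ℕ) (F : Finset V) : Prop :=
  F ∈ T.faces ∧ Z.seq i ⊆ F ∧ Z.seq (i + 1) ⊆ F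

/-- At position `i`, the zigzag `Z` traverses the oriented edge from `x`
to `y` (the head `y` is the vertex shared with the next edge). -/
def Zigzag.Passes (Z : T.Zigzag) (i : ℕ) (x y : V) : Prop :=
  Z.seq i = {x, y} ∧ x ≠ y ∧ y ∈ Z.seq (i + 1)

variable (T)

/-- The triangulation is locally z-knotted in the face `F`:
`𝒵(F) = {Z, Z⁻¹}`. -/
def LocallyZKnotted (F : Finset V) : Prop :=
  (∃ Z : T.Zigzag, Z.Meets F) ∧
  ∀ Z Z' : T.Zigzag, Z.Meets F → Z'.Meets F → Z.Equiv Z' ∨ Z'.IsReverseOf Z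

/-- The triangulation is z-knotted: it has exactly one zigzag up to
reversal. -/
def ZKnotted : Prop :=
  Nonempty T.Zigzag ∧ ∀ Z Z' : T.Zigzag, Z.Equiv Z' ∨ Z'.IsReverseOf Z

/-- The z-monodromy relation of the face `F`: `M_F` sends the oriented edge
`(x,y)` of `F` to the oriented edge `(u,v)` of `F`.  Here `(u,v)` is the first
oriented edge of `F` occurring in the zigzag through `D_F⁻¹(x,y), (x,y)`
after `(x,y)`. -/
def MonodromyRel (F : Finset V) (x y u v : V) : Prop :=
  x ∈ F ∧ y ∈ F ∧
  ∃ Z : T.Zigzag, ∃ i j : ℕ,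
    (∃ z, z ∈ F ∧ z ≠ x ∧ z ≠ y ∧ Z.Passes i z x) ∧
    Z.Passes (i + 1) x y ∧
    i + 1 < j ∧ Z.Passes j u v ∧ u ∈ F ∧ v ∈ F ∧
    (∀ k, i + 1 < k → k < j → ∀ a b, a ∈ F → b ∈ F → ¬ Z.Passes k a b)

/-- The z-monodromy of `F` is the identity (type (M1)). -/
def MFIsId (F : Finset V) : Prop :=
  ∀ x y, x ∈ F → y ∈ F → x ≠ y → T.MonodromyRel F x y x y

/-- The z-monodromy of `F` is `D_F` (type (M2)). -/
def MFIsD (F : Finset V) : Prop :=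
  ∀ x y z : V, ({x, y, z} : Finset V) = F → x ≠ y → y ≠ z → x ≠ z →
    T.MonodromyRel F x y y z

/-- The z-monodromy of `F` is `D_F⁻¹` (type (M5)). -/
def MFIsDInv (F : Finset V) : Prop :=
  ∀ x y z : V, ({x, y, z} : Finset V) = F → x ≠ y → y ≠ z → x ≠ z →
    T.MonodromyRel F x y z x

/-- The z-monodromy of `F` is of type (M3):
`M_F = (-e₁,e₂,e₃)(-e₃,-e₂,e₁)` for a cycle `(e₁,e₂,e₃)` of `D_F`. -/
def MFIsM3 (F : Finset V) : Prop :=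
  ∃ x y z : V, ({x, y, z} : Finset V) = F ∧ x ≠ y ∧ y ≠ z ∧ x ≠ z ∧
    T.MonodromyRel F y x y z ∧ T.MonodromyRel F y z z x ∧
    T.MonodromyRel F z x y x ∧ T.MonodromyRel F x z z y ∧
    T.MonodromyRel F z y x y ∧ T.MonodromyRel F x y x z

/-- The z-monodromy of `F` is of type (M4):
`M_F = (e₁,-e₂)(e₂,-e₁)` with `e₃, -e₃` fixed, for a cycle `(e₁,e₂,e₃)`
of `D_F`. -/
def MFIsM4 (F : Finset V) : Prop :=
  ∃ x y z : V, ({x, y, z} : Finset V) = F ∧ x ≠ y ∧ y ≠ z ∧ x ≠ z ∧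
    T.MonodromyRel F x y z y ∧ T.MonodromyRel F z y x y ∧
    T.MonodromyRel F y z y x ∧ T.MonodromyRel F y x y z ∧
    T.MonodromyRel F z x z x ∧ T.MonodromyRel F x z x z

/-- The dual graph: vertices are faces, adjacent iff they share an edge. -/
def dualGraph : SimpleGraph {F : Finset V // F ∈ T.faces} where
  Adj A B := A ≠ B ∧ ((A : Finset V) ∩ (B : Finset V)).card = 2
  symm := by
    constructor
    intro A B h
    exact ⟨h.1.symm, by rw [Finset.inter_comm]; exact h.2⟩
  loopless := by constructor; intro A h; exact h.1 rfl

end Triangulation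

/-- The faces of the 3-gonal bipyramid: vertices `0,1,2` form the triangle,
`3` and `4` are the two apexes. -/
def bp3Faces : Finset (Finset (Fin 5)) :=
  {{3, 0, 1}, {3, 1, 2}, {3, 2, 0}, {4, 0, 1}, {4, 1, 2}, {4, 2, 0}}

/-- The cyclic list of edges
`a1,12,2b,b3,31,1a,a2,23,3b,b1,12,2a,a3,31,1b,b2,23,3a`
(with `1,2,3,a,b` encoded as `0,1,2,3,4`). -/
def bp3ZigzagList : List (Finset (Fin 5)) :=
  [{3, 0}, {0, 1}, {1, 4}, {4, 2}, {2, 0}, {0, 3}, {3, 1}, {1, 2}, {2, 4},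
   {4, 0}, {0, 1}, {1, 3}, {3, 2}, {2, 0}, {0, 4}, {4, 1}, {1, 2}, {2, 3}]

/-! ### Auxiliary definitions and lemmas for the proof -/

def bp3Edges : List (Finset (Fin 5)) :=
  [{0,1},{1,2},{2,0},{3,0},{3,1},{3,2},{4,0},{4,1},{4,2}]

def StepP (a b c : Finset (Fin 5)) : Prop :=
  b ≠ c ∧ (b ∩ c).Nonempty ∧ (∃ F ∈ bp3Faces, b ⊆ F ∧ c ⊆ F) ∧
  (∀ F ∈ bp3Faces, ∀ F' ∈ bp3Faces, (a ⊆ F ∧ b ⊆ F ∧ b ⊆ F' ∧ c ⊆ F') → F ≠ F') ∧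
  a ∩ c = ∅

instance : ∀ a b c, Decidable (StepP a b c) := fun a b c => by
  unfold StepP; infer_instance

lemma bp3_mem_edges : ∀ a : Finset (Fin 5), a.card = 2 → (∃ F ∈ bp3Faces, a ⊆ F) →
    a ∈ bp3Edges := by decide

lemma bp3_fwd : ∀ k < 18, ∀ c ∈ bp3Edges,
    StepP (bp3ZigzagList.getD k ∅) (bp3ZigzagList.getD ((k+1)%18) ∅) c →
    c = bp3ZigzagList.getD ((k+2)%18) ∅ := by decide

lemma bp3_bwd : ∀ k < 18, ∀ c ∈ bp3Edges,
    StepP (bp3ZigzagList.getD ((k+1)%18) ∅) (bp3ZigzagList.getD k ∅) c →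
    c = bp3ZigzagList.getD ((k+17)%18) ∅ := by decide

lemma bp3_pair : ∀ a ∈ bp3Edges, ∀ b ∈ bp3Edges, a ≠ b → (a ∩ b).Nonempty →
    (∃ F ∈ bp3Faces, a ⊆ F ∧ b ⊆ F) →
    ∃ k < 18, (bp3ZigzagList.getD k ∅ = a ∧ bp3ZigzagList.getD ((k+1)%18) ∅ = b) ∨
      (bp3ZigzagList.getD ((k+1)%18) ∅ = a ∧ bp3ZigzagList.getD k ∅ = b) := by decide

/-- The zigzag sequence as a function on `ℕ`. -/
def bp3L (i : ℕ) : Finset (Fin 5) := bp3ZigzagList.getD (i % 18) ∅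

lemma bp3L_congr {x y : ℕ} (h : x % 18 = y % 18) : bp3L x = bp3L y := by
  unfold bp3L; rw [h]

lemma bp3_fwd' (m : ℕ) (c : Finset (Fin 5)) (hc : c ∈ bp3Edges)
    (h : StepP (bp3L m) (bp3L (m+1)) c) : c = bp3L (m+2) := by
  have h1 : bp3L (m+1) = bp3ZigzagList.getD ((m % 18 + 1) % 18) ∅ := by
    unfold bp3L; congr 1; omega
  have h2 : bp3L (m+2) = bp3ZigzagList.getD ((m % 18 + 2) % 18) ∅ := by
    unfold bp3L; congr 1; omega
  rw [h2]
  exact bp3_fwd (m % 18) (Nat.mod_lt _ (by norm_num)) c hc (by rwa [show bp3L m = bp3ZigzagList.getD (m % 18) ∅ from rfl, h1] at h)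

lemma bp3_bwd' (m : ℕ) (c : Finset (Fin 5)) (hc : c ∈ bp3Edges)
    (h : StepP (bp3L (m+1)) (bp3L m) c) : c = bp3L (m+17) := by
  have h1 : bp3L (m+1) = bp3ZigzagList.getD ((m % 18 + 1) % 18) ∅ := by
    unfold bp3L; congr 1; omega
  have h2 : bp3L (m+17) = bp3ZigzagList.getD ((m % 18 + 17) % 18) ∅ := by
    unfold bp3L; congr 1; omega
  rw [h2]
  exact bp3_bwd (m % 18) (Nat.mod_lt _ (by norm_num)) c hc (by rwa [show bp3L m = bp3ZigzagList.getD (m % 18) ∅ from rfl, h1] at h)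

def Cond3 (a b c : Finset (Fin 5)) : Prop :=
  ∀ F ∈ bp3Faces, ∀ F' ∈ bp3Faces, (a ⊆ F ∧ b ⊆ F ∧ b ⊆ F' ∧ c ⊆ F') → F ≠ F'

instance : ∀ a b c, Decidable (Cond3 a b c) := fun a b c => by
  unfold Cond3; infer_instance

/-- The 3-gonal bipyramid as a triangulation. -/
def bp3T : Triangulation (Fin 5) where
  faces := bp3Faces
  faces_nonempty := by decide
  card_eq := by decide
  edge_two_faces := by decide
  inter_le := by decide
  connected := by
    intro F hF F' hF'
    set R : Finset (Fin 5) → Finset (Fin 5) → Prop :=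
      fun A B => A ∈ bp3Faces ∧ B ∈ bp3Faces ∧ (A ∩ B).card = 2 with hR
    have hsym : Symmetric R := by
      intro A B h
      exact ⟨h.2.1, h.1, by rw [Finset.inter_comm]; exact h.2.2⟩
    have s1 : R {3,0,1} {4,0,1} := ⟨by decide, by decide, by decide⟩
    have hub : ∀ G ∈ bp3Faces, Relation.ReflTransGen R {3, 0, 1} G := by
      intro G hG
      fin_cases hG
      · exact Relation.ReflTransGen.refl
      · exact Relation.ReflTransGen.single ⟨by decide, by decide, by decide⟩
      · exact Relation.ReflTransGen.single ⟨by decide, by decide, by decide⟩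
      · exact Relation.ReflTransGen.single ⟨by decide, by decide, by decide⟩
      · exact (Relation.ReflTransGen.single s1).tail ⟨by decide, by decide, by decide⟩
      · exact (Relation.ReflTransGen.single s1).tail ⟨by decide, by decide, by decide⟩
    exact ((by haveI : Std.Symm R := ⟨hsym⟩; exact Std.Symm.symm _ _ (hub F hF) : Relation.ReflTransGen R F {3, 0, 1}).trans (hub F' hF'))

lemma bp3_mod_lt (i : ℕ) : i % 18 < 18 := Nat.mod_lt _ (by norm_num)

/-- The zigzag of the 3-gonal bipyramid. -/
def bp3Z : bp3T.Zigzag where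
  seq := bp3L
  period := 18
  period_pos := by norm_num
  periodic := fun i => by unfold bp3L; rw [Nat.add_mod_right]
  period_min := by
    intro m hm hper
    by_contra hc
    push_neg at hc
    interval_cases m <;>
      first
        | exact absurd (hper 0) (by decide)
        | exact absurd (hper 1) (by decide)
  isZigzag := by
    refine ⟨?_, ?_, ?_, ?_⟩
    · have key : ∀ r < 18, (bp3ZigzagList.getD r ∅).card = 2 ∧
          ∃ F ∈ bp3Faces, bp3ZigzagList.getD r ∅ ⊆ F := by decide
      exact fun i => key (i % 18) (bp3_mod_lt i)
    · have key : ∀ r < 18,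
          bp3ZigzagList.getD r ∅ ≠ bp3ZigzagList.getD ((r+1)%18) ∅ ∧
          (bp3ZigzagList.getD r ∅ ∩ bp3ZigzagList.getD ((r+1)%18) ∅).Nonempty ∧
          ∃ F ∈ bp3Faces, bp3ZigzagList.getD r ∅ ⊆ F ∧
            bp3ZigzagList.getD ((r+1)%18) ∅ ⊆ F := by decide
      intro i
      have e1 : bp3L (i+1) = bp3ZigzagList.getD ((i % 18 + 1) % 18) ∅ := by
        unfold bp3L; congr 1; omega
      rw [show bp3L i = bp3ZigzagList.getD (i % 18) ∅ from rfl, e1]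
      exact key (i % 18) (bp3_mod_lt i)
    · have key : ∀ r < 18, Cond3 (bp3ZigzagList.getD r ∅)
          (bp3ZigzagList.getD ((r+1)%18) ∅) (bp3ZigzagList.getD ((r+2)%18) ∅) := by decide
      intro i F hF F' hF' h1 h2 h3 h4
      have e1 : bp3L (i+1) = bp3ZigzagList.getD ((i % 18 + 1) % 18) ∅ := by
        unfold bp3L; congr 1; omega
      have e2 : bp3L (i+2) = bp3ZigzagList.getD ((i % 18 + 2) % 18) ∅ := by
        unfold bp3L; congr 1; omega
      rw [e1] at h2 h3
      rw [e2] at h4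
      exact key (i % 18) (bp3_mod_lt i) F hF F' hF' ⟨h1, h2, h3, h4⟩
    · have key : ∀ r < 18,
          bp3ZigzagList.getD r ∅ ∩ bp3ZigzagList.getD ((r+2)%18) ∅ = ∅ := by decide
      intro i
      have e2 : bp3L (i+2) = bp3ZigzagList.getD ((i % 18 + 2) % 18) ∅ := by
        unfold bp3L; congr 1; omega
      rw [show bp3L i = bp3ZigzagList.getD (i % 18) ∅ from rfl, e2]
      exact key (i % 18) (bp3_mod_lt i)

/-- the 3-gonal bipyramid is a z-knotted triangulation of the
sphere whose unique zigzag (up to reversal) is the cyclic sequence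
`a1,12,2b,b3,31,1a,a2,23,3b,b1,12,2a,a3,31,1b,b2,23,3a` of length 18. -/
theorem bp3_zknotted :
    ∃ T : Triangulation (Fin 5), T.faces = bp3Faces ∧
      ∃ Z : T.Zigzag, Z.period = 18 ∧
        (∀ i, Z.seq i = bp3ZigzagList.getD (i % 18) ∅) ∧
        ∀ Z' : T.Zigzag, Z.Equiv Z' ∨ Z'.IsReverseOf Z := by
  refine ⟨bp3T, rfl, bp3Z, rfl, fun i => rfl, ?_⟩
  intro Z'
  obtain ⟨he, hadj, hface, hdisj⟩ := Z'.isZigzag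
  have edge : ∀ i, Z'.seq i ∈ bp3Edges := fun i => bp3_mem_edges _ (he i).1 (he i).2
  have step : ∀ i, StepP (Z'.seq i) (Z'.seq (i+1)) (Z'.seq (i+2)) := by
    intro i
    exact ⟨(hadj (i+1)).1, (hadj (i+1)).2.1, (hadj (i+1)).2.2,
      fun F hF F' hF' h => hface i F hF F' hF' h.1 h.2.1 h.2.2.1 h.2.2.2, hdisj i⟩
  obtain ⟨k, hk, hcase⟩ := bp3_pair _ (edge 0) _ (edge 1) (hadj 0).1 (hadj 0).2.1 (hadj 0).2.2
  rcases hcase with ⟨h0, h1⟩ | ⟨h0, h1⟩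
  · -- forward: Z' is a shift of Z
    left
    refine ⟨k, ?_⟩
    have key : ∀ i, Z'.seq i = bp3L (i + k) ∧ Z'.seq (i+1) = bp3L (i + 1 + k) := by
      intro i
      induction i with
      | zero =>
        refine ⟨h0.symm.trans ?_, h1.symm.trans ?_⟩ <;> · unfold bp3L; congr 1 <;> omega
      | succ n ih =>
        refine ⟨ih.2, ?_⟩
        have hs := step n
        rw [ih.1, ih.2] at hs
        have := bp3_fwd' (n + k) _ (edge (n+2))
          (by rwa [show n + 1 + k = n + k + 1 from by omega] at hs)
        rw [show n + 1 + 1 + k = n + k + 2 from by omega]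
        exact this
    exact fun i => (key i).1
  · -- backward: Z' is the reversal of Z
    right
    refine ⟨k + 1, ?_⟩
    have key : ∀ i, Z'.seq i = bp3L (k + 1 + 17 * i) ∧
        Z'.seq (i+1) = bp3L (k + 1 + 17 * (i+1)) := by
      intro i
      induction i with
      | zero =>
        refine ⟨h0.symm.trans ?_, h1.symm.trans ?_⟩ <;> · unfold bp3L; congr 1 <;> omega
      | succ n ih =>
        refine ⟨ih.2, ?_⟩
        have hs := step n
        rw [ih.1, ih.2] at hs
        rw [bp3L_congr (show (k + 1 + 17 * n) % 18 = (k + 18 + 17 * n + 1) % 18 from by omega),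
            bp3L_congr (show (k + 1 + 17 * (n+1)) % 18 = (k + 18 + 17 * n) % 18 from by omega)] at hs
        have := bp3_bwd' (k + 18 + 17 * n) _ (edge (n+2)) hs
        rw [this]
        exact bp3L_congr (by omega)
    intro i
    show Z'.seq i = bp3L (k + 1 + 18 - i % 18)
    rw [(key i).1]
    exact bp3L_congr (by omega)
end

section
/- In the connected sum BP₃ #_g BP₃' of two 3-gonal bipyramids glued along the faces a12 and a'1'2' via g(a)=a', g(1)=1', g(2)=2', the triangulation is z-knotted, exactly the two faces b12 and b'12 have z-monodromy of type (M2) (M_F = D_F), all other eight faces have z-monodromy of type (M3) or (M4), and the induced subgraph G₂ of the dual graph on type-(M2) faces is the path P₂ on two vertices. -/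
open Finset

/-- The faces of the connected sum of two triangulations with face sets
`faces₁`, `faces₂`, glued along the faces `F₁`, `F₂` via the identification
`g` of the vertices of `F₂` with the vertices of `F₁`. -/
def connSumFaces {V₁ V₂ : Type} [DecidableEq V₁] [DecidableEq V₂]
    (faces₁ : Finset (Finset V₁)) (faces₂ : Finset (Finset V₂))
    (F₁ : Finset V₁) (F₂ : Finset V₂) (g : V₂ → V₁) :
    Finset (Finset (V₁ ⊕ V₂)) :=
  ((faces₁.erase F₁).image fun F => F.image Sum.inl) ∪
  ((faces₂.erase F₂).image fun F =>
    F.image fun w => if w ∈ F₂ then Sum.inl (g w) else Sum.inr w)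

/-- The face `b12` of the first summand. -/
def faceB12 : Finset (Fin 5 ⊕ Fin 5) := {Sum.inl 4, Sum.inl 0, Sum.inl 1}

/-- The face `b'12` coming from the second summand. -/
def faceB'12 : Finset (Fin 5 ⊕ Fin 5) := {Sum.inr 4, Sum.inl 0, Sum.inl 1}

attribute [instance 2000] List.decidableBAll List.decidableBEx

set_option maxRecDepth 4000
set_option synthInstance.maxHeartbeats 4000000
set_option synthInstance.maxSize 5000

abbrev V5 := Fin 5 ⊕ Fin 5

def fA1 : Finset V5 := {(Sum.inl 1), (Sum.inl 2), (Sum.inl 3)}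

def fA2 : Finset V5 := {(Sum.inl 0), (Sum.inl 2), (Sum.inl 3)}

def fA3 : Finset V5 := {(Sum.inl 0), (Sum.inl 1), (Sum.inl 4)}

def fA4 : Finset V5 := {(Sum.inl 1), (Sum.inl 2), (Sum.inl 4)}

def fA5 : Finset V5 := {(Sum.inl 0), (Sum.inl 2), (Sum.inl 4)}

def fB1 : Finset V5 := {(Sum.inl 1), (Sum.inl 3), (Sum.inr 2)}

def fB2 : Finset V5 := {(Sum.inl 0), (Sum.inl 3), (Sum.inr 2)}

def fB3 : Finset V5 := {(Sum.inl 0), (Sum.inl 1), (Sum.inr 4)}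

def fB4 : Finset V5 := {(Sum.inl 1), (Sum.inr 2), (Sum.inr 4)}

def fB5 : Finset V5 := {(Sum.inl 0), (Sum.inr 2), (Sum.inr 4)}

def faces10 : List (Finset V5) := [fA1, fA2, fA3, fA4, fA5, fB1, fB2, fB3, fB4, fB5]

def F10 : Finset (Finset V5) := faces10.toFinset

def edges15 : List (Finset V5) := [{(Sum.inl 2), (Sum.inl 3)}, {(Sum.inl 1), (Sum.inl 2)}, {(Sum.inl 1), (Sum.inl 3)}, {(Sum.inl 0), (Sum.inl 2)}, {(Sum.inl 0), (Sum.inl 3)}, {(Sum.inl 0), (Sum.inl 4)}, {(Sum.inl 1), (Sum.inl 4)}, {(Sum.inl 0), (Sum.inl 1)}, {(Sum.inl 2), (Sum.inl 4)}, {(Sum.inl 3), (Sum.inr 2)}, {(Sum.inl 1), (Sum.inr 2)}, {(Sum.inl 0), (Sum.inr 2)}, {(Sum.inl 0), (Sum.inr 4)}, {(Sum.inl 1), (Sum.inr 4)}, {(Sum.inr 2), (Sum.inr 4)}]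

def edgeList : List (Finset V5) := [{(Sum.inl 3), (Sum.inr 2)}, {(Sum.inl 1), (Sum.inr 2)}, {(Sum.inl 1), (Sum.inr 4)}, {(Sum.inl 0), (Sum.inr 4)}, {(Sum.inl 0), (Sum.inr 2)}, {(Sum.inl 3), (Sum.inr 2)}, {(Sum.inl 1), (Sum.inl 3)}, {(Sum.inl 1), (Sum.inl 2)}, {(Sum.inl 2), (Sum.inl 4)}, {(Sum.inl 0), (Sum.inl 4)}, {(Sum.inl 0), (Sum.inl 1)}, {(Sum.inl 1), (Sum.inr 4)}, {(Sum.inr 2), (Sum.inr 4)}, {(Sum.inl 0), (Sum.inr 2)}, {(Sum.inl 0), (Sum.inl 3)}, {(Sum.inl 2), (Sum.inl 3)}, {(Sum.inl 1), (Sum.inl 2)}, {(Sum.inl 1), (Sum.inl 4)}, {(Sum.inl 0), (Sum.inl 4)}, {(Sum.inl 0), (Sum.inl 2)}, {(Sum.inl 2), (Sum.inl 3)}, {(Sum.inl 1), (Sum.inl 3)}, {(Sum.inl 1), (Sum.inr 2)}, {(Sum.inr 2), (Sum.inr 4)}, {(Sum.inl 0), (Sum.inr 4)}, {(Sum.inl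 0), (Sum.inl 1)}, {(Sum.inl 1), (Sum.inl 4)}, {(Sum.inl 2), (Sum.inl 4)}, {(Sum.inl 0), (Sum.inl 2)}, {(Sum.inl 0), (Sum.inl 3)}]

def zseq (i : ℕ) : Finset V5 := edgeList.getD (i % 30) ∅

def rseq (i : ℕ) : Finset V5 := zseq (30 - i % 30)

def cfListZ : List (Finset V5) := [fB1, fB4, fB3, fB5, fB2, fB1, fA1, fA4, fA5, fA3, fB3, fB4, fB5, fB2, fA2, fA1, fA4, fA3, fA5, fA2, fA1, fB1, fB4, fB5, fB3, fA3, fA4, fA5, fA2, fB2]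

def ofListZ : List (Finset V5) := [fB4, fB3, fB5, fB2, fB1, fA1, fA4, fA5, fA3, fB3, fB4, fB5, fB2, fA2, fA1, fA4, fA3, fA5, fA2, fA1, fB1, fB4, fB5, fB3, fA3, fA4, fA5, fA2, fB2, fB1]

def cfListR : List (Finset V5) := [fB2, fA2, fA5, fA4, fA3, fB3, fB5, fB4, fB1, fA1, fA2, fA5, fA3, fA4, fA1, fA2, fB2, fB5, fB4, fB3, fA3, fA5, fA4, fA1, fB1, fB2, fB5, fB3, fB4, fB1]

def ofListR : List (Finset V5) := [fA2, fA5, fA4, fA3, fB3, fB5, fB4, fB1, fA1, fA2, fA5, fA3, fA4, fA1, fA2, fB2, fB5, fB4, fB3, fA3, fA5, fA4, fA1, fB1, fB2, fB5, fB3, fB4, fB1, fB2]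


def cfz (k : ℕ) : Finset V5 := cfListZ.getD (k % 30) ∅
def ofz (k : ℕ) : Finset V5 := ofListZ.getD (k % 30) ∅
def cfr (k : ℕ) : Finset V5 := cfListR.getD (k % 30) ∅
def ofr (k : ℕ) : Finset V5 := ofListR.getD (k % 30) ∅

lemma zseq_congr {a b : ℕ} (h : a % 30 = b % 30) : zseq a = zseq b := by
  unfold zseq; rw [h]

lemma rseq_congr {a b : ℕ} (h : a % 30 = b % 30) : rseq a = rseq b := by
  unfold rseq; rw [h]

lemma zseq_congr' : ∀ a b : ℕ, a % 30 = b % 30 → zseq a = zseq b := fun _ _ h => zseq_congr h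

lemma rseq_congr' : ∀ a b : ℕ, a % 30 = b % 30 → rseq a = rseq b := fun _ _ h => rseq_congr h

lemma rseq_eq_zseq (a b : ℕ) (h : (30 - a % 30) % 30 = b % 30) : rseq a = zseq b := by
  unfold rseq; exact zseq_congr (by omega)

lemma memF10 {F : Finset V5} (h : F ∈ faces10) : F ∈ F10 := List.mem_toFinset.mpr h

lemma memF10' {F : Finset V5} (h : F ∈ F10) : F ∈ faces10 := List.mem_toFinset.mp h

lemma cover15 : ∀ F ∈ faces10, ∀ x ∈ F, ∀ y ∈ F, x ≠ y → ({x, y} : Finset V5) ∈ edges15 := by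
  decide

lemma edge_mem {F : Finset V5} (hF : F ∈ faces10) {e : Finset V5} (he : e ⊆ F)
    (hc : e.card = 2) : e ∈ edges15 := by
  obtain ⟨x, y, hxy, rfl⟩ := Finset.card_eq_two.mp hc
  exact cover15 F hF x (he (by simp)) y (he (by simp)) hxy

lemma rtg_symm {α} {r : α → α → Prop} (hs : ∀ {a b}, r a b → r b a) {a b : α}
    (h : Relation.ReflTransGen r a b) : Relation.ReflTransGen r b a := by
  induction h with
  | refl => exact .refl
  | tail h1 h2 ih => exact Relation.ReflTransGen.head (hs h2) ih


lemma conn10 : ∀ F ∈ F10, ∀ F' ∈ F10,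
    Relation.ReflTransGen (fun A B => A ∈ F10 ∧ B ∈ F10 ∧ (A ∩ B).card = 2) F F' := by
  have hr : ∀ A B : Finset V5, A ∈ F10 → B ∈ F10 → (A ∩ B).card = 2 →
      (fun A B => A ∈ F10 ∧ B ∈ F10 ∧ (A ∩ B).card = 2) A B := fun A B h1 h2 h3 => ⟨h1, h2, h3⟩
  have base : ∀ F ∈ F10, Relation.ReflTransGen
      (fun A B => A ∈ F10 ∧ B ∈ F10 ∧ (A ∩ B).card = 2) F fA1 := by
    intro F hF
    replace hF := memF10' hF
    simp only [faces10, List.mem_cons, List.not_mem_nil, or_false] at hF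

    rcases hF with rfl|rfl|rfl|rfl|rfl|rfl|rfl|rfl|rfl|rfl

    · exact .refl

    · exact Relation.ReflTransGen.head (hr fA2 fA1 (by decide) (by decide) (by decide)) (.refl)

    · exact Relation.ReflTransGen.head (hr fA3 fA4 (by decide) (by decide) (by decide)) (Relation.ReflTransGen.head (hr fA4 fA1 (by decide) (by decide) (by decide)) (.refl))

    · exact Relation.ReflTransGen.head (hr fA4 fA1 (by decide) (by decide) (by decide)) (.refl)

    · exact Relation.ReflTransGen.head (hr fA5 fA2 (by decide) (by decide) (by decide)) (Relation.ReflTransGen.head (hr fA2 fA1 (by decide) (by decide) (by decide)) (.refl))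

    · exact Relation.ReflTransGen.head (hr fB1 fA1 (by decide) (by decide) (by decide)) (.refl)

    · exact Relation.ReflTransGen.head (hr fB2 fB1 (by decide) (by decide) (by decide)) (Relation.ReflTransGen.head (hr fB1 fA1 (by decide) (by decide) (by decide)) (.refl))

    · exact Relation.ReflTransGen.head (hr fB3 fB4 (by decide) (by decide) (by decide)) (Relation.ReflTransGen.head (hr fB4 fB1 (by decide) (by decide) (by decide)) (Relation.ReflTransGen.head (hr fB1 fA1 (by decide) (by decide) (by decide)) (.refl)))

    · exact Relation.ReflTransGen.head (hr fB4 fB1 (by decide) (by decide) (by decide)) (Relation.ReflTransGen.head (hr fB1 fA1 (by decide) (by decide) (by decide)) (.refl))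

    · exact Relation.ReflTransGen.head (hr fB5 fB4 (by decide) (by decide) (by decide)) (Relation.ReflTransGen.head (hr fB4 fB1 (by decide) (by decide) (by decide)) (Relation.ReflTransGen.head (hr fB1 fA1 (by decide) (by decide) (by decide)) (.refl)))

  intro F hF F' hF'
  exact (base F hF).trans (rtg_symm (fun h => ⟨h.2.1, h.1, by rw [Finset.inter_comm]; exact h.2.2⟩) (base F' hF'))

def T10 : Triangulation V5 where
  faces := F10
  faces_nonempty := ⟨fA1, by decide⟩
  card_eq := fun F hF =>
    (by decide : ∀ F ∈ faces10, F.card = 3) F (memF10' hF)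
  edge_two_faces := by
    intro e h1 h2
    obtain ⟨F, hF, hs⟩ := h2
    exact (by decide : ∀ e ∈ edges15, (F10.filter fun G => e ⊆ G).card = 2) e
      (edge_mem (memF10' hF) hs h1)
  inter_le := fun F hF F' hF' =>
    (by decide : ∀ F ∈ faces10, ∀ F' ∈ faces10, F ≠ F' → (F ∩ F').card ≤ 2)
      F (memF10' hF) F' (memF10' hF')
  connected := conn10

lemma lift3 (s : ℕ → Finset V5) (hs : ∀ a b : ℕ, a % 30 = b % 30 → s a = s b)
    (P : Finset V5 → Finset V5 → Finset V5 → Prop)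
    (h : ∀ r : Fin 30, P (s r.1) (s (r.1+1)) (s (r.1+2))) :
    ∀ i, P (s i) (s (i+1)) (s (i+2)) := by
  intro i
  have e0 : s i = s (i % 30) := hs _ _ (by omega)
  have e1 : s (i+1) = s (i % 30 + 1) := hs _ _ (by omega)
  have e2 : s (i+2) = s (i % 30 + 2) := hs _ _ (by omega)
  rw [e0, e1, e2]; exact h ⟨i % 30, by omega⟩

lemma seq_zigzag (s : ℕ → Finset V5) (hs : ∀ a b : ℕ, a % 30 = b % 30 → s a = s b)
    (h1 : ∀ r : Fin 30, (s r.1).card = 2 ∧ ∃ F ∈ faces10, s r.1 ⊆ F)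
    (h2 : ∀ r : Fin 30, s r.1 ≠ s (r.1+1) ∧ (s r.1 ∩ s (r.1+1)).Nonempty ∧
      ∃ F ∈ faces10, s r.1 ⊆ F ∧ s (r.1+1) ⊆ F)
    (h3 : ∀ r : Fin 30, ∀ F ∈ faces10, ∀ F' ∈ faces10, s r.1 ⊆ F → s (r.1+1) ⊆ F →
      s (r.1+1) ⊆ F' → s (r.1+2) ⊆ F' → F ≠ F')
    (h4 : ∀ r : Fin 30, s r.1 ∩ s (r.1+2) = ∅) : T10.IsZigzagSeq s := by
  refine ⟨?_, ?_, ?_, ?_⟩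
  · intro i
    obtain ⟨hc, F, hF, hsub⟩ := lift3 s hs (fun a _ _ => a.card = 2 ∧ ∃ F ∈ faces10, a ⊆ F) h1 i
    exact ⟨hc, F, memF10 hF, hsub⟩
  · intro i
    obtain ⟨hne, hcap, F, hF, hs1, hs2⟩ := lift3 s hs
      (fun a b _ => a ≠ b ∧ (a ∩ b).Nonempty ∧ ∃ F ∈ faces10, a ⊆ F ∧ b ⊆ F) h2 i
    exact ⟨hne, hcap, F, memF10 hF, hs1, hs2⟩
  · intro i F hF F' hF'
    exact lift3 s hs
      (fun a b c => ∀ F ∈ faces10, ∀ F' ∈ faces10, a ⊆ F → b ⊆ F → b ⊆ F' → c ⊆ F' → F ≠ F')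
      h3 i F (memF10' hF) F' (memF10' hF')
  · exact lift3 s hs (fun a _ c => a ∩ c = ∅) h4

lemma zseq_zigzag : T10.IsZigzagSeq zseq :=
  seq_zigzag zseq zseq_congr' (by decide) (by decide) (by decide) (by decide)

lemma rseq_zigzag : T10.IsZigzagSeq rseq :=
  seq_zigzag rseq rseq_congr' (by decide) (by decide) (by decide) (by decide)

lemma zdart_ne : ∀ r : Fin 30, 0 < r.1 → ¬(zseq r.1 = zseq 0 ∧ zseq (r.1+1) = zseq 1) := by decide

lemma rdart_ne : ∀ r : Fin 30, 0 < r.1 → ¬(rseq r.1 = rseq 0 ∧ rseq (r.1+1) = rseq 1) := by decide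

def Z0 : T10.Zigzag where
  seq := zseq
  period := 30
  period_pos := by norm_num
  periodic := fun i => zseq_congr (by omega)
  period_min := fun m hm h => by
    by_contra hlt
    push_neg at hlt
    have h0 : zseq m = zseq 0 := by have := h 0; rwa [Nat.zero_add] at this
    have h1 : zseq (m+1) = zseq 1 := by have := h 1; rwa [show 1+m = m+1 by omega] at this
    exact zdart_ne ⟨m, by omega⟩ hm ⟨h0, h1⟩
  isZigzag := zseq_zigzag

def R0 : T10.Zigzag where
  seq := rseq
  period := 30
  period_pos := by norm_num
  periodic := fun i => rseq_congr (by omega)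
  period_min := fun m hm h => by
    by_contra hlt
    push_neg at hlt
    have h0 : rseq m = rseq 0 := by have := h 0; rwa [Nat.zero_add] at this
    have h1 : rseq (m+1) = rseq 1 := by have := h 1; rwa [show 1+m = m+1 by omega] at this
    exact rdart_ne ⟨m, by omega⟩ hm ⟨h0, h1⟩
  isZigzag := rseq_zigzag

lemma next_eq {f : ℕ → Finset V5} (hf : T10.IsZigzagSeq f) (i : ℕ) {F F' : Finset V5}
    (hF : F ∈ T10.faces) (hF' : F' ∈ T10.faces)
    (h1 : f i ⊆ F) (h2 : f (i+1) ⊆ F) (h2' : f (i+1) ⊆ F') (hne : F ≠ F') :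
    f (i+2) = F' \ f i := by
  obtain ⟨hne01, hcap01, G, hG, hg1, hg2⟩ := hf.2.1 (i+1)
  have hFG : F ≠ G := hf.2.2.1 i F hF G hG h1 h2 hg1 hg2
  have hedge : (f (i+1)).card = 2 := (hf.1 (i+1)).1
  have h2faces := T10.edge_two_faces (f (i+1)) hedge ⟨F, hF, h2⟩
  have hGF' : G = F' := by
    by_contra hne2
    have hsub : ({F, G, F'} : Finset (Finset V5)) ⊆ T10.faces.filter (fun X => f (i+1) ⊆ X) := by
      intro X hX
      simp only [Finset.mem_insert, Finset.mem_singleton] at hX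
      rcases hX with rfl|rfl|rfl
      · exact Finset.mem_filter.mpr ⟨hF, h2⟩
      · exact Finset.mem_filter.mpr ⟨hG, hg1⟩
      · exact Finset.mem_filter.mpr ⟨hF', h2'⟩
    have hcard : ({F, G, F'} : Finset (Finset V5)).card = 3 := by
      rw [Finset.card_insert_of_notMem (by simp [hFG, hne]),
        Finset.card_insert_of_notMem (by simp [hne2]), Finset.card_singleton]
    have := Finset.card_le_card hsub
    omega
  have hdisj := hf.2.2.2 i
  have hsub2 : f (i+2) ⊆ F' \ f i := by
    intro a ha
    rw [Finset.mem_sdiff]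
    refine ⟨hGF' ▸ hg2 ha, fun hin => ?_⟩
    have : a ∈ f i ∩ f (i+2) := Finset.mem_inter.mpr ⟨hin, ha⟩
    rw [hdisj] at this
    exact absurd this (Finset.notMem_empty a)
  have hcard2 : (f (i+2)).card = 2 := (hf.1 (i+2)).1
  obtain ⟨sv, hsv⟩ := (hf.2.1 i).2.1
  have hsvF' : sv ∈ F' := h2' (Finset.mem_inter.mp hsv).2
  have hsvfi : sv ∈ f i := (Finset.mem_inter.mp hsv).1
  have hcardF' : F'.card = 3 := T10.card_eq F' hF'
  have hnn : 0 < (F' ∩ f i).card := Finset.card_pos.mpr ⟨sv, Finset.mem_inter.mpr ⟨hsvF', hsvfi⟩⟩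
  have hsum : (F' \ f i).card + (F' ∩ f i).card = F'.card := Finset.card_sdiff_add_card_inter F' (f i)
  exact Finset.eq_of_subset_of_card_le hsub2 (by omega)

lemma ztable : ∀ r : Fin 30, cfz r.1 ∈ F10 ∧ ofz r.1 ∈ F10 ∧ zseq r.1 ⊆ cfz r.1 ∧
    zseq (r.1+1) ⊆ cfz r.1 ∧ zseq (r.1+1) ⊆ ofz r.1 ∧ cfz r.1 ≠ ofz r.1 ∧
    ofz r.1 \ zseq r.1 = zseq (r.1+2) := by decide

lemma rtable : ∀ r : Fin 30, cfr r.1 ∈ F10 ∧ ofr r.1 ∈ F10 ∧ rseq r.1 ⊆ cfr r.1 ∧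
    rseq (r.1+1) ⊆ cfr r.1 ∧ rseq (r.1+1) ⊆ ofr r.1 ∧ cfr r.1 ≠ ofr r.1 ∧
    ofr r.1 \ rseq r.1 = rseq (r.1+2) := by decide

lemma ztable' (k : ℕ) : cfz (k % 30) ∈ F10 ∧ ofz (k % 30) ∈ F10 ∧
    zseq (k % 30) ⊆ cfz (k % 30) ∧ zseq (k % 30 + 1) ⊆ cfz (k % 30) ∧
    zseq (k % 30 + 1) ⊆ ofz (k % 30) ∧ cfz (k % 30) ≠ ofz (k % 30) ∧
    ofz (k % 30) \ zseq (k % 30) = zseq (k % 30 + 2) := ztable ⟨k % 30, by omega⟩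

lemma rtable' (k : ℕ) : cfr (k % 30) ∈ F10 ∧ ofr (k % 30) ∈ F10 ∧
    rseq (k % 30) ⊆ cfr (k % 30) ∧ rseq (k % 30 + 1) ⊆ cfr (k % 30) ∧
    rseq (k % 30 + 1) ⊆ ofr (k % 30) ∧ cfr (k % 30) ≠ ofr (k % 30) ∧
    ofr (k % 30) \ rseq (k % 30) = rseq (k % 30 + 2) := rtable ⟨k % 30, by omega⟩

lemma step_zseq (f : ℕ → Finset V5) (hf : T10.IsZigzagSeq f) (k i : ℕ)
    (h1 : f i = zseq k) (h2 : f (i+1) = zseq (k+1)) : f (i+2) = zseq (k+2) := by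
  obtain ⟨hc1, hc2, hc3, hc4, hc5, hc6, hc7⟩ := ztable' k
  have e0 : zseq k = zseq (k % 30) := zseq_congr (by omega)
  have e1 : zseq (k+1) = zseq (k % 30 + 1) := zseq_congr (by omega)
  have key := next_eq hf i hc1 hc2 (by rw [h1, e0]; exact hc3)
    (by rw [h2, e1]; exact hc4) (by rw [h2, e1]; exact hc5) hc6
  rw [key, h1, e0, hc7]
  exact zseq_congr (by omega)

lemma step_rseq (f : ℕ → Finset V5) (hf : T10.IsZigzagSeq f) (k i : ℕ)
    (h1 : f i = rseq k) (h2 : f (i+1) = rseq (k+1)) : f (i+2) = rseq (k+2) := by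
  obtain ⟨hc1, hc2, hc3, hc4, hc5, hc6, hc7⟩ := rtable' k
  have e0 : rseq k = rseq (k % 30) := rseq_congr (by omega)
  have e1 : rseq (k+1) = rseq (k % 30 + 1) := rseq_congr (by omega)
  have key := next_eq hf i hc1 hc2 (by rw [h1, e0]; exact hc3)
    (by rw [h2, e1]; exact hc4) (by rw [h2, e1]; exact hc5) hc6
  rw [key, h1, e0, hc7]
  exact rseq_congr (by omega)

lemma dart_class : ∀ e₁ ∈ edges15, ∀ e₂ ∈ edges15, e₁ ≠ e₂ →
    (∃ F ∈ faces10, e₁ ⊆ F ∧ e₂ ⊆ F) →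
    ∃ r : Fin 30, (e₁ = zseq r.1 ∧ e₂ = zseq (r.1+1)) ∨ (e₁ = rseq r.1 ∧ e₂ = rseq (r.1+1)) := by
  decide

lemma classify (Z : T10.Zigzag) :
    (∃ k < 30, ∀ i, Z.seq i = zseq (i + k)) ∨ (∃ k < 30, ∀ i, Z.seq i = rseq (i + k)) := by
  have hz := Z.isZigzag
  have he0 := hz.1 0
  have he1 := hz.1 1
  obtain ⟨hne, hcap, F, hF, hs0, hs1⟩ := hz.2.1 0
  have hFl : F ∈ faces10 := memF10' hF
  have := dart_class (Z.seq 0) (edge_mem hFl hs0 he0.1) (Z.seq 1) (edge_mem hFl hs1 he1.1)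
    hne ⟨F, hFl, hs0, hs1⟩
  obtain ⟨r, hr⟩ := this
  rcases hr with ⟨ha, hb⟩|⟨ha, hb⟩
  · left
    refine ⟨r.1, r.2, ?_⟩
    have key : ∀ i, Z.seq i = zseq (i + r.1) ∧ Z.seq (i+1) = zseq (i + r.1 + 1) := by
      intro i
      induction i with
      | zero => exact ⟨ha.trans (zseq_congr (by omega)), hb.trans (zseq_congr (by omega))⟩
      | succ n ih =>
        refine ⟨ih.2.trans (zseq_congr (by omega)), ?_⟩
        have := step_zseq Z.seq hz (n + r.1) n ih.1 ih.2
        exact this.trans (zseq_congr (by omega))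
    exact fun i => (key i).1
  · right
    refine ⟨r.1, r.2, ?_⟩
    have key : ∀ i, Z.seq i = rseq (i + r.1) ∧ Z.seq (i+1) = rseq (i + r.1 + 1) := by
      intro i
      induction i with
      | zero => exact ⟨ha.trans (rseq_congr (by omega)), hb.trans (rseq_congr (by omega))⟩
      | succ n ih =>
        refine ⟨ih.2.trans (rseq_congr (by omega)), ?_⟩
        have := step_rseq Z.seq hz (n + r.1) n ih.1 ih.2
        exact this.trans (rseq_congr (by omega))
    exact fun i => (key i).1

lemma zper (Z : T10.Zigzag) {k : ℕ} (hk : k < 30) (hZ : ∀ i, Z.seq i = zseq (i + k)) :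
    Z.period = 30 := by
  refine le_antisymm (Z.period_min 30 (by norm_num) fun i => by
    rw [hZ, hZ]; exact zseq_congr (by omega)) ?_
  by_contra hlt
  push_neg at hlt
  have hp := Z.period_pos
  have h0 : zseq Z.period = zseq 0 := by
    have := Z.periodic (30 - k)
    rw [hZ, hZ] at this
    calc zseq Z.period = zseq (30 - k + Z.period + k) := zseq_congr (by omega)
    _ = zseq (30 - k + k) := this
    _ = zseq 0 := zseq_congr (by omega)
  have h1 : zseq (Z.period + 1) = zseq 1 := by
    have := Z.periodic (31 - k)
    rw [hZ, hZ] at this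
    calc zseq (Z.period + 1) = zseq (31 - k + Z.period + k) := zseq_congr (by omega)
    _ = zseq (31 - k + k) := this
    _ = zseq 1 := zseq_congr (by omega)
  exact zdart_ne ⟨Z.period, by omega⟩ hp ⟨h0, h1⟩

lemma rper (Z : T10.Zigzag) {k : ℕ} (hk : k < 30) (hZ : ∀ i, Z.seq i = rseq (i + k)) :
    Z.period = 30 := by
  refine le_antisymm (Z.period_min 30 (by norm_num) fun i => by
    rw [hZ, hZ]; exact rseq_congr (by omega)) ?_
  by_contra hlt
  push_neg at hlt
  have hp := Z.period_pos
  have h0 : rseq Z.period = rseq 0 := by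
    have := Z.periodic (30 - k)
    rw [hZ, hZ] at this
    calc rseq Z.period = rseq (30 - k + Z.period + k) := rseq_congr (by omega)
    _ = rseq (30 - k + k) := this
    _ = rseq 0 := rseq_congr (by omega)
  have h1 : rseq (Z.period + 1) = rseq 1 := by
    have := Z.periodic (31 - k)
    rw [hZ, hZ] at this
    calc rseq (Z.period + 1) = rseq (31 - k + Z.period + k) := rseq_congr (by omega)
    _ = rseq (31 - k + k) := this
    _ = rseq 1 := rseq_congr (by omega)
  exact rdart_ne ⟨Z.period, by omega⟩ hp ⟨h0, h1⟩

lemma zknot : T10.ZKnotted := by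
  refine ⟨⟨Z0⟩, fun Z Z' => ?_⟩
  rcases classify Z with ⟨k1, hk1, h1⟩|⟨k1, hk1, h1⟩ <;>
    rcases classify Z' with ⟨k2, hk2, h2⟩|⟨k2, hk2, h2⟩
  · exact Or.inl ⟨30 + k2 - k1, fun i => by rw [h2, h1]; exact zseq_congr (by omega)⟩
  · refine Or.inr ⟨60 - k1 - k2, fun i => ?_⟩
    rw [zper Z hk1 h1, h2, h1]
    exact rseq_eq_zseq _ _ (by omega)
  · refine Or.inr ⟨60 - k1 - k2, fun i => ?_⟩
    rw [rper Z hk1 h1, h2, h1]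
    exact (rseq_eq_zseq _ _ (by omega)).symm
  · exact Or.inl ⟨30 + k2 - k1, fun i => by rw [h2, h1]; exact rseq_congr (by omega)⟩

def passes (s : ℕ → Finset V5) (i : ℕ) (x y : V5) : Prop :=
  s i = {x, y} ∧ x ≠ y ∧ y ∈ s (i+1)

instance (s : ℕ → Finset V5) (i : ℕ) (x y : V5) : Decidable (passes s i x y) := by
  unfold passes; infer_instance

def Mon (s : ℕ → Finset V5) (F : Finset V5) (x y u v : V5) : Prop :=
  ∃ i j : ℕ, (∃ z, z ∈ F ∧ z ≠ x ∧ z ≠ y ∧ passes s i z x) ∧ passes s (i+1) x y ∧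
    i + 1 < j ∧ passes s j u v ∧ u ∈ F ∧ v ∈ F ∧
    ∀ k, i + 1 < k → k < j → ∀ a b, a ∈ F → b ∈ F → ¬ passes s k a b

lemma passes_shift {s f : ℕ → Finset V5} {c : ℕ} (hf : ∀ i, f i = s (i + c)) {m : ℕ} {a b : V5}
    (h : passes f m a b) : passes s (m + c) a b := by
  obtain ⟨p1, p2, p3⟩ := h
  refine ⟨by rw [← hf]; exact p1, p2, ?_⟩
  rw [hf] at p3
  rwa [show m + 1 + c = m + c + 1 by omega] at p3

lemma mon_shift (f s : ℕ → Finset V5) (c : ℕ) (hf : ∀ i, f i = s (i + c)) {F : Finset V5}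
    {x y u v : V5} (h : Mon f F x y u v) : Mon s F x y u v := by
  obtain ⟨i, j, ⟨z, hz1, hz2, hz3, hz4⟩, h2, h3, h4, h5, h6, h7⟩ := h
  refine ⟨i + c, j + c, ⟨z, hz1, hz2, hz3, passes_shift hf hz4⟩, ?_, by omega,
    passes_shift hf h4, h5, h6, ?_⟩
  · have := passes_shift hf h2
    rwa [show i + 1 + c = i + c + 1 by omega] at this
  · intro k hk1 hk2 a b ha hb hp
    have hp' : passes f (k - c) a b := by
      obtain ⟨p1, p2, p3⟩ := hp
      refine ⟨by rw [hf, show k - c + c = k by omega]; exact p1, p2, ?_⟩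
      rw [hf, show k - c + 1 + c = k + 1 by omega]
      exact p3
    exact h7 (k - c) (by omega) (by omega) a b ha hb hp'

lemma monodromy_iff (F : Finset V5) (x y u v : V5) :
    T10.MonodromyRel F x y u v ↔ x ∈ F ∧ y ∈ F ∧ (Mon zseq F x y u v ∨ Mon rseq F x y u v) := by
  constructor
  · rintro ⟨hx, hy, Z, i, j, h1, h2, h3, h4, h5, h6, h7⟩
    refine ⟨hx, hy, ?_⟩
    have hm : Mon Z.seq F x y u v := ⟨i, j, h1, h2, h3, h4, h5, h6, h7⟩
    rcases classify Z with ⟨k, hk, hZ⟩|⟨k, hk, hZ⟩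
    · exact Or.inl (mon_shift Z.seq zseq k hZ hm)
    · exact Or.inr (mon_shift Z.seq rseq k hZ hm)
  · rintro ⟨hx, hy, h|h⟩
    · obtain ⟨i, j, h1, h2, h3, h4, h5, h6, h7⟩ := h
      exact ⟨hx, hy, Z0, i, j, h1, h2, h3, h4, h5, h6, h7⟩
    · obtain ⟨i, j, h1, h2, h3, h4, h5, h6, h7⟩ := h
      exact ⟨hx, hy, R0, i, j, h1, h2, h3, h4, h5, h6, h7⟩

def BMon (s : ℕ → Finset V5) (F : Finset V5) (x y u v : V5) : Prop :=
  ∃ i : Fin 30, ((∃ z, z ∈ F ∧ z ≠ x ∧ z ≠ y ∧ passes s i.1 z x) ∧ passes s (i.1+1) x y) ∧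
    ∃ j : Fin 61, i.1 + 1 < j.1 ∧ passes s j.1 u v ∧
      ∀ k : Fin 61, i.1 + 1 < k.1 → k.1 < j.1 → ∀ a b : V5, a ∈ F → b ∈ F → ¬ passes s k.1 a b

instance (s : ℕ → Finset V5) (F : Finset V5) (x y u v : V5) : Decidable (BMon s F x y u v) := by
  unfold BMon; infer_instance

lemma passes_congr (s : ℕ → Finset V5) (hs : ∀ a b : ℕ, a % 30 = b % 30 → s a = s b)
    {a b : ℕ} (h : a % 30 = b % 30) {x y : V5} : passes s a x y ↔ passes s b x y := by
  unfold passes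
  rw [hs a b h, hs (a+1) (b+1) (by omega)]

lemma mon_to_bmon (s : ℕ → Finset V5) (hs : ∀ a b : ℕ, a % 30 = b % 30 → s a = s b)
    {F : Finset V5} {x y u v : V5} (hx : x ∈ F) (hy : y ∈ F) (h : Mon s F x y u v) :
    BMon s F x y u v := by
  obtain ⟨i, j, ⟨z, hz1, hz2, hz3, hz4⟩, h2, h3, h4, h5, h6, h7⟩ := h
  have hj : j ≤ i + 31 := by
    by_contra hgt
    push_neg at hgt
    exact h7 (i + 31) (by omega) (by omega) x y hx hy ((passes_congr s hs (by omega)).mp h2)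
  have p1 : passes s (i % 30) z x := (passes_congr s hs (by omega)).mp hz4
  have p2 : passes s (i % 30 + 1) x y := (passes_congr s hs (by omega)).mp h2
  have p4 : passes s (j - 30 * (i / 30)) u v := (passes_congr s hs (by omega)).mp h4
  have hb1 : i % 30 < 30 := by omega
  have hb2 : j - 30 * (i / 30) < 61 := by omega
  have hlt : i % 30 + 1 < j - 30 * (i / 30) := by omega
  have hmin : ∀ k : ℕ, i % 30 + 1 < k → k < j - 30 * (i / 30) →
      ∀ a b : V5, a ∈ F → b ∈ F → ¬ passes s k a b := by
    intro k hk1 hk2 a b ha hb hp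
    exact h7 (k + 30 * (i / 30)) (by omega) (by omega) a b ha hb
      ((passes_congr s hs (by omega)).mp hp)
  exact ⟨⟨i % 30, hb1⟩, ⟨⟨z, hz1, hz2, hz3, p1⟩, p2⟩, ⟨j - 30 * (i / 30), hb2⟩, hlt, p4,
    fun k hka hkb => hmin k.1 hka hkb⟩


lemma mr0 : T10.MonodromyRel fA1 (Sum.inl 2) (Sum.inl 3) (Sum.inl 2) (Sum.inl 1) := by
  refine (monodromy_iff _ _ _ _ _).mpr ⟨by decide, by decide, Or.inr ⟨14, 23,
    ⟨(Sum.inl 1), by decide, by decide, by decide, by decide⟩, by decide, by omega, by decide,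
    by decide, by decide, ?_⟩⟩
  intro k hk1 hk2
  interval_cases k <;> decide

lemma mr1 : T10.MonodromyRel fA1 (Sum.inl 2) (Sum.inl 1) (Sum.inl 2) (Sum.inl 3) := by
  refine (monodromy_iff _ _ _ _ _).mpr ⟨by decide, by decide, Or.inl ⟨15, 20,
    ⟨(Sum.inl 3), by decide, by decide, by decide, by decide⟩, by decide, by omega, by decide,
    by decide, by decide, ?_⟩⟩
  intro k hk1 hk2
  interval_cases k <;> decide

lemma mr2 : T10.MonodromyRel fA1 (Sum.inl 3) (Sum.inl 2) (Sum.inl 1) (Sum.inl 2) := by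
  refine (monodromy_iff _ _ _ _ _).mpr ⟨by decide, by decide, Or.inr ⟨9, 14,
    ⟨(Sum.inl 1), by decide, by decide, by decide, by decide⟩, by decide, by omega, by decide,
    by decide, by decide, ?_⟩⟩
  intro k hk1 hk2
  interval_cases k <;> decide

lemma mr3 : T10.MonodromyRel fA1 (Sum.inl 3) (Sum.inl 1) (Sum.inl 3) (Sum.inl 1) := by
  refine (monodromy_iff _ _ _ _ _).mpr ⟨by decide, by decide, Or.inl ⟨20, 36,
    ⟨(Sum.inl 2), by decide, by decide, by decide, by decide⟩, by decide, by omega, by decide,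
    by decide, by decide, ?_⟩⟩
  intro k hk1 hk2
  interval_cases k <;> decide

lemma mr4 : T10.MonodromyRel fA1 (Sum.inl 1) (Sum.inl 2) (Sum.inl 3) (Sum.inl 2) := by
  refine (monodromy_iff _ _ _ _ _).mpr ⟨by decide, by decide, Or.inl ⟨6, 15,
    ⟨(Sum.inl 3), by decide, by decide, by decide, by decide⟩, by decide, by omega, by decide,
    by decide, by decide, ?_⟩⟩
  intro k hk1 hk2
  interval_cases k <;> decide

lemma mr5 : T10.MonodromyRel fA1 (Sum.inl 1) (Sum.inl 3) (Sum.inl 1) (Sum.inl 3) := by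
  refine (monodromy_iff _ _ _ _ _).mpr ⟨by decide, by decide, Or.inr ⟨23, 39,
    ⟨(Sum.inl 2), by decide, by decide, by decide, by decide⟩, by decide, by omega, by decide,
    by decide, by decide, ?_⟩⟩
  intro k hk1 hk2
  interval_cases k <;> decide

lemma mr6 : T10.MonodromyRel fA2 (Sum.inl 2) (Sum.inl 3) (Sum.inl 2) (Sum.inl 0) := by
  refine (monodromy_iff _ _ _ _ _).mpr ⟨by decide, by decide, Or.inl ⟨19, 28,
    ⟨(Sum.inl 0), by decide, by decide, by decide, by decide⟩, by decide, by omega, by decide,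
    by decide, by decide, ?_⟩⟩
  intro k hk1 hk2
  interval_cases k <;> decide

lemma mr7 : T10.MonodromyRel fA2 (Sum.inl 2) (Sum.inl 0) (Sum.inl 2) (Sum.inl 3) := by
  refine (monodromy_iff _ _ _ _ _).mpr ⟨by decide, by decide, Or.inr ⟨10, 15,
    ⟨(Sum.inl 3), by decide, by decide, by decide, by decide⟩, by decide, by omega, by decide,
    by decide, by decide, ?_⟩⟩
  intro k hk1 hk2
  interval_cases k <;> decide

lemma mr8 : T10.MonodromyRel fA2 (Sum.inl 3) (Sum.inl 2) (Sum.inl 0) (Sum.inl 2) := by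
  refine (monodromy_iff _ _ _ _ _).mpr ⟨by decide, by decide, Or.inl ⟨14, 19,
    ⟨(Sum.inl 0), by decide, by decide, by decide, by decide⟩, by decide, by omega, by decide,
    by decide, by decide, ?_⟩⟩
  intro k hk1 hk2
  interval_cases k <;> decide

lemma mr9 : T10.MonodromyRel fA2 (Sum.inl 3) (Sum.inl 0) (Sum.inl 3) (Sum.inl 0) := by
  refine (monodromy_iff _ _ _ _ _).mpr ⟨by decide, by decide, Or.inr ⟨15, 31,
    ⟨(Sum.inl 2), by decide, by decide, by decide, by decide⟩, by decide, by omega, by decide,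
    by decide, by decide, ?_⟩⟩
  intro k hk1 hk2
  interval_cases k <;> decide

lemma mr10 : T10.MonodromyRel fA2 (Sum.inl 0) (Sum.inl 2) (Sum.inl 3) (Sum.inl 2) := by
  refine (monodromy_iff _ _ _ _ _).mpr ⟨by decide, by decide, Or.inr ⟨1, 10,
    ⟨(Sum.inl 3), by decide, by decide, by decide, by decide⟩, by decide, by omega, by decide,
    by decide, by decide, ?_⟩⟩
  intro k hk1 hk2
  interval_cases k <;> decide

lemma mr11 : T10.MonodromyRel fA2 (Sum.inl 0) (Sum.inl 3) (Sum.inl 0) (Sum.inl 3) := by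
  refine (monodromy_iff _ _ _ _ _).mpr ⟨by decide, by decide, Or.inl ⟨28, 44,
    ⟨(Sum.inl 2), by decide, by decide, by decide, by decide⟩, by decide, by omega, by decide,
    by decide, by decide, ?_⟩⟩
  intro k hk1 hk2
  interval_cases k <;> decide

lemma mr12 : T10.MonodromyRel fA3 (Sum.inl 4) (Sum.inl 0) (Sum.inl 0) (Sum.inl 1) := by
  refine (monodromy_iff _ _ _ _ _).mpr ⟨by decide, by decide, Or.inl ⟨17, 25,
    ⟨(Sum.inl 1), by decide, by decide, by decide, by decide⟩, by decide, by omega, by decide,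
    by decide, by decide, ?_⟩⟩
  intro k hk1 hk2
  interval_cases k <;> decide

lemma mr13 : T10.MonodromyRel fA3 (Sum.inl 4) (Sum.inl 1) (Sum.inl 1) (Sum.inl 0) := by
  refine (monodromy_iff _ _ _ _ _).mpr ⟨by decide, by decide, Or.inr ⟨12, 20,
    ⟨(Sum.inl 0), by decide, by decide, by decide, by decide⟩, by decide, by omega, by decide,
    by decide, by decide, ?_⟩⟩
  intro k hk1 hk2
  interval_cases k <;> decide

lemma mr14 : T10.MonodromyRel fA3 (Sum.inl 0) (Sum.inl 4) (Sum.inl 4) (Sum.inl 1) := by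
  refine (monodromy_iff _ _ _ _ _).mpr ⟨by decide, by decide, Or.inr ⟨20, 34,
    ⟨(Sum.inl 1), by decide, by decide, by decide, by decide⟩, by decide, by omega, by decide,
    by decide, by decide, ?_⟩⟩
  intro k hk1 hk2
  interval_cases k <;> decide

lemma mr15 : T10.MonodromyRel fA3 (Sum.inl 0) (Sum.inl 1) (Sum.inl 1) (Sum.inl 4) := by
  refine (monodromy_iff _ _ _ _ _).mpr ⟨by decide, by decide, Or.inl ⟨9, 17,
    ⟨(Sum.inl 4), by decide, by decide, by decide, by decide⟩, by decide, by omega, by decide,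
    by decide, by decide, ?_⟩⟩
  intro k hk1 hk2
  interval_cases k <;> decide

lemma mr16 : T10.MonodromyRel fA3 (Sum.inl 1) (Sum.inl 4) (Sum.inl 4) (Sum.inl 0) := by
  refine (monodromy_iff _ _ _ _ _).mpr ⟨by decide, by decide, Or.inl ⟨25, 39,
    ⟨(Sum.inl 0), by decide, by decide, by decide, by decide⟩, by decide, by omega, by decide,
    by decide, by decide, ?_⟩⟩
  intro k hk1 hk2
  interval_cases k <;> decide

lemma mr17 : T10.MonodromyRel fA3 (Sum.inl 1) (Sum.inl 0) (Sum.inl 0) (Sum.inl 4) := by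
  refine (monodromy_iff _ _ _ _ _).mpr ⟨by decide, by decide, Or.inr ⟨4, 12,
    ⟨(Sum.inl 4), by decide, by decide, by decide, by decide⟩, by decide, by omega, by decide,
    by decide, by decide, ?_⟩⟩
  intro k hk1 hk2
  interval_cases k <;> decide

lemma mr18 : T10.MonodromyRel fA4 (Sum.inl 2) (Sum.inl 4) (Sum.inl 2) (Sum.inl 1) := by
  refine (monodromy_iff _ _ _ _ _).mpr ⟨by decide, by decide, Or.inl ⟨7, 16,
    ⟨(Sum.inl 1), by decide, by decide, by decide, by decide⟩, by decide, by omega, by decide,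
    by decide, by decide, ?_⟩⟩
  intro k hk1 hk2
  interval_cases k <;> decide

lemma mr19 : T10.MonodromyRel fA4 (Sum.inl 2) (Sum.inl 1) (Sum.inl 2) (Sum.inl 4) := by
  refine (monodromy_iff _ _ _ _ _).mpr ⟨by decide, by decide, Or.inr ⟨22, 33,
    ⟨(Sum.inl 4), by decide, by decide, by decide, by decide⟩, by decide, by omega, by decide,
    by decide, by decide, ?_⟩⟩
  intro k hk1 hk2
  interval_cases k <;> decide

lemma mr20 : T10.MonodromyRel fA4 (Sum.inl 4) (Sum.inl 2) (Sum.inl 1) (Sum.inl 2) := by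
  refine (monodromy_iff _ _ _ _ _).mpr ⟨by decide, by decide, Or.inl ⟨26, 37,
    ⟨(Sum.inl 1), by decide, by decide, by decide, by decide⟩, by decide, by omega, by decide,
    by decide, by decide, ?_⟩⟩
  intro k hk1 hk2
  interval_cases k <;> decide

lemma mr21 : T10.MonodromyRel fA4 (Sum.inl 4) (Sum.inl 1) (Sum.inl 4) (Sum.inl 1) := by
  refine (monodromy_iff _ _ _ _ _).mpr ⟨by decide, by decide, Or.inr ⟨3, 13,
    ⟨(Sum.inl 2), by decide, by decide, by decide, by decide⟩, by decide, by omega, by decide,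
    by decide, by decide, ?_⟩⟩
  intro k hk1 hk2
  interval_cases k <;> decide

lemma mr22 : T10.MonodromyRel fA4 (Sum.inl 1) (Sum.inl 2) (Sum.inl 4) (Sum.inl 2) := by
  refine (monodromy_iff _ _ _ _ _).mpr ⟨by decide, by decide, Or.inr ⟨13, 22,
    ⟨(Sum.inl 4), by decide, by decide, by decide, by decide⟩, by decide, by omega, by decide,
    by decide, by decide, ?_⟩⟩
  intro k hk1 hk2
  interval_cases k <;> decide

lemma mr23 : T10.MonodromyRel fA4 (Sum.inl 1) (Sum.inl 4) (Sum.inl 1) (Sum.inl 4) := by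
  refine (monodromy_iff _ _ _ _ _).mpr ⟨by decide, by decide, Or.inl ⟨16, 26,
    ⟨(Sum.inl 2), by decide, by decide, by decide, by decide⟩, by decide, by omega, by decide,
    by decide, by decide, ?_⟩⟩
  intro k hk1 hk2
  interval_cases k <;> decide

lemma mr24 : T10.MonodromyRel fA5 (Sum.inl 2) (Sum.inl 4) (Sum.inl 2) (Sum.inl 0) := by
  refine (monodromy_iff _ _ _ _ _).mpr ⟨by decide, by decide, Or.inr ⟨2, 11,
    ⟨(Sum.inl 0), by decide, by decide, by decide, by decide⟩, by decide, by omega, by decide,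
    by decide, by decide, ?_⟩⟩
  intro k hk1 hk2
  interval_cases k <;> decide

lemma mr25 : T10.MonodromyRel fA5 (Sum.inl 2) (Sum.inl 0) (Sum.inl 2) (Sum.inl 4) := by
  refine (monodromy_iff _ _ _ _ _).mpr ⟨by decide, by decide, Or.inl ⟨27, 38,
    ⟨(Sum.inl 4), by decide, by decide, by decide, by decide⟩, by decide, by omega, by decide,
    by decide, by decide, ?_⟩⟩
  intro k hk1 hk2
  interval_cases k <;> decide

lemma mr26 : T10.MonodromyRel fA5 (Sum.inl 4) (Sum.inl 2) (Sum.inl 0) (Sum.inl 2) := by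
  refine (monodromy_iff _ _ _ _ _).mpr ⟨by decide, by decide, Or.inr ⟨21, 32,
    ⟨(Sum.inl 0), by decide, by decide, by decide, by decide⟩, by decide, by omega, by decide,
    by decide, by decide, ?_⟩⟩
  intro k hk1 hk2
  interval_cases k <;> decide

lemma mr27 : T10.MonodromyRel fA5 (Sum.inl 4) (Sum.inl 0) (Sum.inl 4) (Sum.inl 0) := by
  refine (monodromy_iff _ _ _ _ _).mpr ⟨by decide, by decide, Or.inl ⟨8, 18,
    ⟨(Sum.inl 2), by decide, by decide, by decide, by decide⟩, by decide, by omega, by decide,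
    by decide, by decide, ?_⟩⟩
  intro k hk1 hk2
  interval_cases k <;> decide

lemma mr28 : T10.MonodromyRel fA5 (Sum.inl 0) (Sum.inl 2) (Sum.inl 4) (Sum.inl 2) := by
  refine (monodromy_iff _ _ _ _ _).mpr ⟨by decide, by decide, Or.inl ⟨18, 27,
    ⟨(Sum.inl 4), by decide, by decide, by decide, by decide⟩, by decide, by omega, by decide,
    by decide, by decide, ?_⟩⟩
  intro k hk1 hk2
  interval_cases k <;> decide

lemma mr29 : T10.MonodromyRel fA5 (Sum.inl 0) (Sum.inl 4) (Sum.inl 0) (Sum.inl 4) := by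
  refine (monodromy_iff _ _ _ _ _).mpr ⟨by decide, by decide, Or.inr ⟨11, 21,
    ⟨(Sum.inl 2), by decide, by decide, by decide, by decide⟩, by decide, by omega, by decide,
    by decide, by decide, ?_⟩⟩
  intro k hk1 hk2
  interval_cases k <;> decide

lemma mr30 : T10.MonodromyRel fB1 (Sum.inl 3) (Sum.inr 2) (Sum.inl 1) (Sum.inr 2) := by
  refine (monodromy_iff _ _ _ _ _).mpr ⟨by decide, by decide, Or.inr ⟨24, 29,
    ⟨(Sum.inl 1), by decide, by decide, by decide, by decide⟩, by decide, by omega, by decide,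
    by decide, by decide, ?_⟩⟩
  intro k hk1 hk2
  interval_cases k <;> decide

lemma mr31 : T10.MonodromyRel fB1 (Sum.inl 3) (Sum.inl 1) (Sum.inl 3) (Sum.inl 1) := by
  refine (monodromy_iff _ _ _ _ _).mpr ⟨by decide, by decide, Or.inl ⟨5, 21,
    ⟨(Sum.inr 2), by decide, by decide, by decide, by decide⟩, by decide, by omega, by decide,
    by decide, by decide, ?_⟩⟩
  intro k hk1 hk2
  interval_cases k <;> decide

lemma mr32 : T10.MonodromyRel fB1 (Sum.inr 2) (Sum.inl 3) (Sum.inr 2) (Sum.inl 1) := by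
  refine (monodromy_iff _ _ _ _ _).mpr ⟨by decide, by decide, Or.inr ⟨29, 38,
    ⟨(Sum.inl 1), by decide, by decide, by decide, by decide⟩, by decide, by omega, by decide,
    by decide, by decide, ?_⟩⟩
  intro k hk1 hk2
  interval_cases k <;> decide

lemma mr33 : T10.MonodromyRel fB1 (Sum.inr 2) (Sum.inl 1) (Sum.inr 2) (Sum.inl 3) := by
  refine (monodromy_iff _ _ _ _ _).mpr ⟨by decide, by decide, Or.inl ⟨0, 5,
    ⟨(Sum.inl 3), by decide, by decide, by decide, by decide⟩, by decide, by omega, by decide,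
    by decide, by decide, ?_⟩⟩
  intro k hk1 hk2
  interval_cases k <;> decide

lemma mr34 : T10.MonodromyRel fB1 (Sum.inl 1) (Sum.inl 3) (Sum.inl 1) (Sum.inl 3) := by
  refine (monodromy_iff _ _ _ _ _).mpr ⟨by decide, by decide, Or.inr ⟨8, 24,
    ⟨(Sum.inr 2), by decide, by decide, by decide, by decide⟩, by decide, by omega, by decide,
    by decide, by decide, ?_⟩⟩
  intro k hk1 hk2
  interval_cases k <;> decide

lemma mr35 : T10.MonodromyRel fB1 (Sum.inl 1) (Sum.inr 2) (Sum.inl 3) (Sum.inr 2) := by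
  refine (monodromy_iff _ _ _ _ _).mpr ⟨by decide, by decide, Or.inl ⟨21, 30,
    ⟨(Sum.inl 3), by decide, by decide, by decide, by decide⟩, by decide, by omega, by decide,
    by decide, by decide, ?_⟩⟩
  intro k hk1 hk2
  interval_cases k <;> decide

lemma mr36 : T10.MonodromyRel fB2 (Sum.inl 3) (Sum.inr 2) (Sum.inl 0) (Sum.inr 2) := by
  refine (monodromy_iff _ _ _ _ _).mpr ⟨by decide, by decide, Or.inl ⟨29, 34,
    ⟨(Sum.inl 0), by decide, by decide, by decide, by decide⟩, by decide, by omega, by decide,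
    by decide, by decide, ?_⟩⟩
  intro k hk1 hk2
  interval_cases k <;> decide

lemma mr37 : T10.MonodromyRel fB2 (Sum.inl 3) (Sum.inl 0) (Sum.inl 3) (Sum.inl 0) := by
  refine (monodromy_iff _ _ _ _ _).mpr ⟨by decide, by decide, Or.inr ⟨0, 16,
    ⟨(Sum.inr 2), by decide, by decide, by decide, by decide⟩, by decide, by omega, by decide,
    by decide, by decide, ?_⟩⟩
  intro k hk1 hk2
  interval_cases k <;> decide

lemma mr38 : T10.MonodromyRel fB2 (Sum.inr 2) (Sum.inl 3) (Sum.inr 2) (Sum.inl 0) := by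
  refine (monodromy_iff _ _ _ _ _).mpr ⟨by decide, by decide, Or.inl ⟨4, 13,
    ⟨(Sum.inl 0), by decide, by decide, by decide, by decide⟩, by decide, by omega, by decide,
    by decide, by decide, ?_⟩⟩
  intro k hk1 hk2
  interval_cases k <;> decide

lemma mr39 : T10.MonodromyRel fB2 (Sum.inr 2) (Sum.inl 0) (Sum.inr 2) (Sum.inl 3) := by
  refine (monodromy_iff _ _ _ _ _).mpr ⟨by decide, by decide, Or.inr ⟨25, 30,
    ⟨(Sum.inl 3), by decide, by decide, by decide, by decide⟩, by decide, by omega, by decide,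
    by decide, by decide, ?_⟩⟩
  intro k hk1 hk2
  interval_cases k <;> decide

lemma mr40 : T10.MonodromyRel fB2 (Sum.inl 0) (Sum.inl 3) (Sum.inl 0) (Sum.inl 3) := by
  refine (monodromy_iff _ _ _ _ _).mpr ⟨by decide, by decide, Or.inl ⟨13, 29,
    ⟨(Sum.inr 2), by decide, by decide, by decide, by decide⟩, by decide, by omega, by decide,
    by decide, by decide, ?_⟩⟩
  intro k hk1 hk2
  interval_cases k <;> decide

lemma mr41 : T10.MonodromyRel fB2 (Sum.inl 0) (Sum.inr 2) (Sum.inl 3) (Sum.inr 2) := by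
  refine (monodromy_iff _ _ _ _ _).mpr ⟨by decide, by decide, Or.inr ⟨16, 25,
    ⟨(Sum.inl 3), by decide, by decide, by decide, by decide⟩, by decide, by omega, by decide,
    by decide, by decide, ?_⟩⟩
  intro k hk1 hk2
  interval_cases k <;> decide

lemma mr42 : T10.MonodromyRel fB3 (Sum.inr 4) (Sum.inl 0) (Sum.inl 0) (Sum.inl 1) := by
  refine (monodromy_iff _ _ _ _ _).mpr ⟨by decide, by decide, Or.inl ⟨2, 10,
    ⟨(Sum.inl 1), by decide, by decide, by decide, by decide⟩, by decide, by omega, by decide,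
    by decide, by decide, ?_⟩⟩
  intro k hk1 hk2
  interval_cases k <;> decide

lemma mr43 : T10.MonodromyRel fB3 (Sum.inr 4) (Sum.inl 1) (Sum.inl 1) (Sum.inl 0) := by
  refine (monodromy_iff _ _ _ _ _).mpr ⟨by decide, by decide, Or.inr ⟨27, 35,
    ⟨(Sum.inl 0), by decide, by decide, by decide, by decide⟩, by decide, by omega, by decide,
    by decide, by decide, ?_⟩⟩
  intro k hk1 hk2
  interval_cases k <;> decide

lemma mr44 : T10.MonodromyRel fB3 (Sum.inl 0) (Sum.inr 4) (Sum.inr 4) (Sum.inl 1) := by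
  refine (monodromy_iff _ _ _ _ _).mpr ⟨by decide, by decide, Or.inr ⟨5, 19,
    ⟨(Sum.inl 1), by decide, by decide, by decide, by decide⟩, by decide, by omega, by decide,
    by decide, by decide, ?_⟩⟩
  intro k hk1 hk2
  interval_cases k <;> decide

lemma mr45 : T10.MonodromyRel fB3 (Sum.inl 0) (Sum.inl 1) (Sum.inl 1) (Sum.inr 4) := by
  refine (monodromy_iff _ _ _ _ _).mpr ⟨by decide, by decide, Or.inl ⟨24, 32,
    ⟨(Sum.inr 4), by decide, by decide, by decide, by decide⟩, by decide, by omega, by decide,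
    by decide, by decide, ?_⟩⟩
  intro k hk1 hk2
  interval_cases k <;> decide

lemma mr46 : T10.MonodromyRel fB3 (Sum.inl 1) (Sum.inr 4) (Sum.inr 4) (Sum.inl 0) := by
  refine (monodromy_iff _ _ _ _ _).mpr ⟨by decide, by decide, Or.inl ⟨10, 24,
    ⟨(Sum.inl 0), by decide, by decide, by decide, by decide⟩, by decide, by omega, by decide,
    by decide, by decide, ?_⟩⟩
  intro k hk1 hk2
  interval_cases k <;> decide

lemma mr47 : T10.MonodromyRel fB3 (Sum.inl 1) (Sum.inl 0) (Sum.inl 0) (Sum.inr 4) := by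
  refine (monodromy_iff _ _ _ _ _).mpr ⟨by decide, by decide, Or.inr ⟨19, 27,
    ⟨(Sum.inr 4), by decide, by decide, by decide, by decide⟩, by decide, by omega, by decide,
    by decide, by decide, ?_⟩⟩
  intro k hk1 hk2
  interval_cases k <;> decide

lemma mr48 : T10.MonodromyRel fB4 (Sum.inr 2) (Sum.inr 4) (Sum.inr 2) (Sum.inl 1) := by
  refine (monodromy_iff _ _ _ _ _).mpr ⟨by decide, by decide, Or.inl ⟨22, 31,
    ⟨(Sum.inl 1), by decide, by decide, by decide, by decide⟩, by decide, by omega, by decide,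
    by decide, by decide, ?_⟩⟩
  intro k hk1 hk2
  interval_cases k <;> decide

lemma mr49 : T10.MonodromyRel fB4 (Sum.inr 2) (Sum.inl 1) (Sum.inr 2) (Sum.inr 4) := by
  refine (monodromy_iff _ _ _ _ _).mpr ⟨by decide, by decide, Or.inr ⟨7, 18,
    ⟨(Sum.inr 4), by decide, by decide, by decide, by decide⟩, by decide, by omega, by decide,
    by decide, by decide, ?_⟩⟩
  intro k hk1 hk2
  interval_cases k <;> decide

lemma mr50 : T10.MonodromyRel fB4 (Sum.inr 4) (Sum.inr 2) (Sum.inl 1) (Sum.inr 2) := by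
  refine (monodromy_iff _ _ _ _ _).mpr ⟨by decide, by decide, Or.inl ⟨11, 22,
    ⟨(Sum.inl 1), by decide, by decide, by decide, by decide⟩, by decide, by omega, by decide,
    by decide, by decide, ?_⟩⟩
  intro k hk1 hk2
  interval_cases k <;> decide

lemma mr51 : T10.MonodromyRel fB4 (Sum.inr 4) (Sum.inl 1) (Sum.inr 4) (Sum.inl 1) := by
  refine (monodromy_iff _ _ _ _ _).mpr ⟨by decide, by decide, Or.inr ⟨18, 28,
    ⟨(Sum.inr 2), by decide, by decide, by decide, by decide⟩, by decide, by omega, by decide,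
    by decide, by decide, ?_⟩⟩
  intro k hk1 hk2
  interval_cases k <;> decide

lemma mr52 : T10.MonodromyRel fB4 (Sum.inl 1) (Sum.inr 2) (Sum.inr 4) (Sum.inr 2) := by
  refine (monodromy_iff _ _ _ _ _).mpr ⟨by decide, by decide, Or.inr ⟨28, 37,
    ⟨(Sum.inr 4), by decide, by decide, by decide, by decide⟩, by decide, by omega, by decide,
    by decide, by decide, ?_⟩⟩
  intro k hk1 hk2
  interval_cases k <;> decide

lemma mr53 : T10.MonodromyRel fB4 (Sum.inl 1) (Sum.inr 4) (Sum.inl 1) (Sum.inr 4) := by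
  refine (monodromy_iff _ _ _ _ _).mpr ⟨by decide, by decide, Or.inl ⟨1, 11,
    ⟨(Sum.inr 2), by decide, by decide, by decide, by decide⟩, by decide, by omega, by decide,
    by decide, by decide, ?_⟩⟩
  intro k hk1 hk2
  interval_cases k <;> decide

lemma mr54 : T10.MonodromyRel fB5 (Sum.inr 2) (Sum.inr 4) (Sum.inr 2) (Sum.inl 0) := by
  refine (monodromy_iff _ _ _ _ _).mpr ⟨by decide, by decide, Or.inr ⟨17, 26,
    ⟨(Sum.inl 0), by decide, by decide, by decide, by decide⟩, by decide, by omega, by decide,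
    by decide, by decide, ?_⟩⟩
  intro k hk1 hk2
  interval_cases k <;> decide

lemma mr55 : T10.MonodromyRel fB5 (Sum.inr 2) (Sum.inl 0) (Sum.inr 2) (Sum.inr 4) := by
  refine (monodromy_iff _ _ _ _ _).mpr ⟨by decide, by decide, Or.inl ⟨12, 23,
    ⟨(Sum.inr 4), by decide, by decide, by decide, by decide⟩, by decide, by omega, by decide,
    by decide, by decide, ?_⟩⟩
  intro k hk1 hk2
  interval_cases k <;> decide

lemma mr56 : T10.MonodromyRel fB5 (Sum.inr 4) (Sum.inr 2) (Sum.inl 0) (Sum.inr 2) := by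
  refine (monodromy_iff _ _ _ _ _).mpr ⟨by decide, by decide, Or.inr ⟨6, 17,
    ⟨(Sum.inl 0), by decide, by decide, by decide, by decide⟩, by decide, by omega, by decide,
    by decide, by decide, ?_⟩⟩
  intro k hk1 hk2
  interval_cases k <;> decide

lemma mr57 : T10.MonodromyRel fB5 (Sum.inr 4) (Sum.inl 0) (Sum.inr 4) (Sum.inl 0) := by
  refine (monodromy_iff _ _ _ _ _).mpr ⟨by decide, by decide, Or.inl ⟨23, 33,
    ⟨(Sum.inr 2), by decide, by decide, by decide, by decide⟩, by decide, by omega, by decide,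
    by decide, by decide, ?_⟩⟩
  intro k hk1 hk2
  interval_cases k <;> decide

lemma mr58 : T10.MonodromyRel fB5 (Sum.inl 0) (Sum.inr 2) (Sum.inr 4) (Sum.inr 2) := by
  refine (monodromy_iff _ _ _ _ _).mpr ⟨by decide, by decide, Or.inl ⟨3, 12,
    ⟨(Sum.inr 4), by decide, by decide, by decide, by decide⟩, by decide, by omega, by decide,
    by decide, by decide, ?_⟩⟩
  intro k hk1 hk2
  interval_cases k <;> decide

lemma mr59 : T10.MonodromyRel fB5 (Sum.inl 0) (Sum.inr 4) (Sum.inl 0) (Sum.inr 4) := by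
  refine (monodromy_iff _ _ _ _ _).mpr ⟨by decide, by decide, Or.inr ⟨26, 36,
    ⟨(Sum.inr 2), by decide, by decide, by decide, by decide⟩, by decide, by omega, by decide,
    by decide, by decide, ?_⟩⟩
  intro k hk1 hk2
  interval_cases k <;> decide

lemma hD_fA3 : T10.MFIsD fA3 := by
  intro x y z hxyz hxy hyz hxz
  have key : ∀ x y z : V5, ({x, y, z} : Finset V5) = fA3 → x ≠ y → y ≠ z → x ≠ z →
      ((x = (Sum.inl 0) ∧ y = (Sum.inl 1) ∧ z = (Sum.inl 4)) ∨ (x = (Sum.inl 0) ∧ y = (Sum.inl 4) ∧ z = (Sum.inl 1)) ∨ (x = (Sum.inl 1) ∧ y = (Sum.inl 0) ∧ z = (Sum.inl 4)) ∨ (x = (Sum.inl 1) ∧ y = (Sum.inl 4) ∧ z = (Sum.inl 0)) ∨ (x = (Sum.inl 4) ∧ y = (Sum.inl 0) ∧ z = (Sum.inl 1)) ∨ (x = (Sum.inl 4) ∧ y = (Sum.inl 1) ∧ z = (Sum.inl 0))) := by decide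
  rcases key x y z hxyz hxy hyz hxz with ⟨rfl, rfl, rfl⟩|⟨rfl, rfl, rfl⟩|⟨rfl, rfl, rfl⟩|⟨rfl, rfl, rfl⟩|⟨rfl, rfl, rfl⟩|⟨rfl, rfl, rfl⟩
  · exact mr15
  · exact mr14
  · exact mr17
  · exact mr16
  · exact mr12
  · exact mr13

lemma hD_fB3 : T10.MFIsD fB3 := by
  intro x y z hxyz hxy hyz hxz
  have key : ∀ x y z : V5, ({x, y, z} : Finset V5) = fB3 → x ≠ y → y ≠ z → x ≠ z →
      ((x = (Sum.inl 0) ∧ y = (Sum.inl 1) ∧ z = (Sum.inr 4)) ∨ (x = (Sum.inl 0) ∧ y = (Sum.inr 4) ∧ z = (Sum.inl 1)) ∨ (x = (Sum.inl 1) ∧ y = (Sum.inl 0) ∧ z = (Sum.inr 4)) ∨ (x = (Sum.inl 1) ∧ y = (Sum.inr 4) ∧ z = (Sum.inl 0)) ∨ (x = (Sum.inr 4) ∧ y = (Sum.inl 0) ∧ z = (Sum.inl 1)) ∨ (x = (Sum.inr 4) ∧ y = (Sum.inl 1) ∧ z = (Sum.inl 0))) := by decide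
  rcases key x y z hxyz hxy hyz hxz with ⟨rfl, rfl, rfl⟩|⟨rfl, rfl, rfl⟩|⟨rfl, rfl, rfl⟩|⟨rfl, rfl, rfl⟩|⟨rfl, rfl, rfl⟩|⟨rfl, rfl, rfl⟩
  · exact mr45
  · exact mr44
  · exact mr47
  · exact mr46
  · exact mr42
  · exact mr43

lemma hM4_fA1 : T10.MFIsM4 fA1 :=
  ⟨(Sum.inl 3), (Sum.inl 2), (Sum.inl 1), by decide, by decide, by decide, by decide, mr2, mr4, mr1, mr0, mr5, mr3⟩

lemma hnD_fA1 : ¬ T10.MFIsD fA1 := by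
  intro h
  have hm := h (Sum.inl 3) (Sum.inl 2) (Sum.inl 1) (by decide) (by decide) (by decide) (by decide)
  rw [monodromy_iff] at hm
  rcases hm.2.2 with h'|h'
  · exact absurd (mon_to_bmon zseq zseq_congr' hm.1 hm.2.1 h') (by decide)
  · exact absurd (mon_to_bmon rseq rseq_congr' hm.1 hm.2.1 h') (by decide)

lemma hM4_fA2 : T10.MFIsM4 fA2 :=
  ⟨(Sum.inl 3), (Sum.inl 2), (Sum.inl 0), by decide, by decide, by decide, by decide, mr8, mr10, mr7, mr6, mr11, mr9⟩

lemma hnD_fA2 : ¬ T10.MFIsD fA2 := by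
  intro h
  have hm := h (Sum.inl 3) (Sum.inl 2) (Sum.inl 0) (by decide) (by decide) (by decide) (by decide)
  rw [monodromy_iff] at hm
  rcases hm.2.2 with h'|h'
  · exact absurd (mon_to_bmon zseq zseq_congr' hm.1 hm.2.1 h') (by decide)
  · exact absurd (mon_to_bmon rseq rseq_congr' hm.1 hm.2.1 h') (by decide)

lemma hM4_fA4 : T10.MFIsM4 fA4 :=
  ⟨(Sum.inl 4), (Sum.inl 2), (Sum.inl 1), by decide, by decide, by decide, by decide, mr20, mr22, mr19, mr18, mr23, mr21⟩

lemma hnD_fA4 : ¬ T10.MFIsD fA4 := by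
  intro h
  have hm := h (Sum.inl 4) (Sum.inl 2) (Sum.inl 1) (by decide) (by decide) (by decide) (by decide)
  rw [monodromy_iff] at hm
  rcases hm.2.2 with h'|h'
  · exact absurd (mon_to_bmon zseq zseq_congr' hm.1 hm.2.1 h') (by decide)
  · exact absurd (mon_to_bmon rseq rseq_congr' hm.1 hm.2.1 h') (by decide)

lemma hM4_fA5 : T10.MFIsM4 fA5 :=
  ⟨(Sum.inl 4), (Sum.inl 2), (Sum.inl 0), by decide, by decide, by decide, by decide, mr26, mr28, mr25, mr24, mr29, mr27⟩

lemma hnD_fA5 : ¬ T10.MFIsD fA5 := by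
  intro h
  have hm := h (Sum.inl 4) (Sum.inl 2) (Sum.inl 0) (by decide) (by decide) (by decide) (by decide)
  rw [monodromy_iff] at hm
  rcases hm.2.2 with h'|h'
  · exact absurd (mon_to_bmon zseq zseq_congr' hm.1 hm.2.1 h') (by decide)
  · exact absurd (mon_to_bmon rseq rseq_congr' hm.1 hm.2.1 h') (by decide)

lemma hM4_fB1 : T10.MFIsM4 fB1 :=
  ⟨(Sum.inl 3), (Sum.inr 2), (Sum.inl 1), by decide, by decide, by decide, by decide, mr30, mr35, mr33, mr32, mr34, mr31⟩

lemma hnD_fB1 : ¬ T10.MFIsD fB1 := by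
  intro h
  have hm := h (Sum.inl 3) (Sum.inr 2) (Sum.inl 1) (by decide) (by decide) (by decide) (by decide)
  rw [monodromy_iff] at hm
  rcases hm.2.2 with h'|h'
  · exact absurd (mon_to_bmon zseq zseq_congr' hm.1 hm.2.1 h') (by decide)
  · exact absurd (mon_to_bmon rseq rseq_congr' hm.1 hm.2.1 h') (by decide)

lemma hM4_fB2 : T10.MFIsM4 fB2 :=
  ⟨(Sum.inl 3), (Sum.inr 2), (Sum.inl 0), by decide, by decide, by decide, by decide, mr36, mr41, mr39, mr38, mr40, mr37⟩

lemma hnD_fB2 : ¬ T10.MFIsD fB2 := by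
  intro h
  have hm := h (Sum.inl 3) (Sum.inr 2) (Sum.inl 0) (by decide) (by decide) (by decide) (by decide)
  rw [monodromy_iff] at hm
  rcases hm.2.2 with h'|h'
  · exact absurd (mon_to_bmon zseq zseq_congr' hm.1 hm.2.1 h') (by decide)
  · exact absurd (mon_to_bmon rseq rseq_congr' hm.1 hm.2.1 h') (by decide)

lemma hM4_fB4 : T10.MFIsM4 fB4 :=
  ⟨(Sum.inr 4), (Sum.inr 2), (Sum.inl 1), by decide, by decide, by decide, by decide, mr50, mr52, mr49, mr48, mr53, mr51⟩

lemma hnD_fB4 : ¬ T10.MFIsD fB4 := by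
  intro h
  have hm := h (Sum.inr 4) (Sum.inr 2) (Sum.inl 1) (by decide) (by decide) (by decide) (by decide)
  rw [monodromy_iff] at hm
  rcases hm.2.2 with h'|h'
  · exact absurd (mon_to_bmon zseq zseq_congr' hm.1 hm.2.1 h') (by decide)
  · exact absurd (mon_to_bmon rseq rseq_congr' hm.1 hm.2.1 h') (by decide)

lemma hM4_fB5 : T10.MFIsM4 fB5 :=
  ⟨(Sum.inr 4), (Sum.inr 2), (Sum.inl 0), by decide, by decide, by decide, by decide, mr56, mr58, mr55, mr54, mr59, mr57⟩

lemma hnD_fB5 : ¬ T10.MFIsD fB5 := by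
  intro h
  have hm := h (Sum.inr 4) (Sum.inr 2) (Sum.inl 0) (by decide) (by decide) (by decide) (by decide)
  rw [monodromy_iff] at hm
  rcases hm.2.2 with h'|h'
  · exact absurd (mon_to_bmon zseq zseq_congr' hm.1 hm.2.1 h') (by decide)
  · exact absurd (mon_to_bmon rseq rseq_congr' hm.1 hm.2.1 h') (by decide)


/-- the connected sum `BP₃ #_g BP₃'` of two 3-gonal bipyramids
glued along the faces `a12` and `a'1'2'` via `g(a) = a'`, `g(1) = 1'`,
`g(2) = 2'` is z-knotted; exactly the faces `b12` and `b'12` have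
z-monodromy of type (M2), all remaining eight faces are of type (M3) or
(M4), and `G₂` is the path `P₂`: its two vertices `b12` and `b'12` are
adjacent in the dual graph. -/
theorem bp3_connected_sum :
    ∃ T : Triangulation (Fin 5 ⊕ Fin 5),
      T.faces = connSumFaces bp3Faces bp3Faces ({3, 0, 1} : Finset (Fin 5))
        ({3, 0, 1} : Finset (Fin 5)) id ∧
      T.ZKnotted ∧
      (∀ F ∈ T.faces, (T.MFIsD F ↔ (F = faceB12 ∨ F = faceB'12))) ∧
      (∀ F ∈ T.faces, F ≠ faceB12 → F ≠ faceB'12 →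
        T.MFIsM3 F ∨ T.MFIsM4 F) ∧
      faceB12 ∈ T.faces ∧ faceB'12 ∈ T.faces ∧
      (faceB12 ∩ faceB'12).card = 2 := by
  refine ⟨T10, by decide, zknot, ?_, ?_, by decide, by decide, by decide⟩
  · intro F hF
    have hF2 : F ∈ faces10 := memF10' hF
    simp only [faces10, List.mem_cons, List.not_mem_nil, or_false] at hF2
    rcases hF2 with rfl|rfl|rfl|rfl|rfl|rfl|rfl|rfl|rfl|rfl
    · exact ⟨fun h => absurd h hnD_fA1, fun h => absurd h (by decide)⟩
    · exact ⟨fun h => absurd h hnD_fA2, fun h => absurd h (by decide)⟩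
    · exact ⟨fun _ => Or.inl (by decide), fun _ => hD_fA3⟩
    · exact ⟨fun h => absurd h hnD_fA4, fun h => absurd h (by decide)⟩
    · exact ⟨fun h => absurd h hnD_fA5, fun h => absurd h (by decide)⟩
    · exact ⟨fun h => absurd h hnD_fB1, fun h => absurd h (by decide)⟩
    · exact ⟨fun h => absurd h hnD_fB2, fun h => absurd h (by decide)⟩
    · exact ⟨fun _ => Or.inr (by decide), fun _ => hD_fB3⟩
    · exact ⟨fun h => absurd h hnD_fB4, fun h => absurd h (by decide)⟩
    · exact ⟨fun h => absurd h hnD_fB5, fun h => absurd h (by decide)⟩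
  · intro F hF h1 h2
    have hF2 : F ∈ faces10 := memF10' hF
    simp only [faces10, List.mem_cons, List.not_mem_nil, or_false] at hF2
    rcases hF2 with rfl|rfl|rfl|rfl|rfl|rfl|rfl|rfl|rfl|rfl
    · exact Or.inr hM4_fA1
    · exact Or.inr hM4_fA2
    · exact absurd (by decide : fA3 = faceB12) h1
    · exact Or.inr hM4_fA4
    · exact Or.inr hM4_fA5
    · exact Or.inr hM4_fB1
    · exact Or.inr hM4_fB2
    · exact absurd (by decide : fB3 = faceB'12) h2
    · exact Or.inr hM4_fB4
    · exact Or.inr hM4_fB5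
end
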